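/- Let k be a field, let a₁, d₁, d₂ ∈ k with d₁ ≠ 0 and d₂ ≠ 0, and let A be the 2-dimensional k-vector space with basis {x, y} and the k-bilinear multiplication determined by x² = a₁(x + (d₂/d₁)y), xy = −d₂(x + (d₂/d₁)y), yx = −(a₁d₁/d₂)(x + (d₂/d₁)y), y² = d₁(x + (d₂/d₁)y). Then (a·b)·c = 0 for all a, b, c ∈ A; consequently, together with the zero comultiplication Δ = 0, A is a self-distributive bialgebra. -/

import Mathlib

/-- The 2-dimensional algebra with basis `{x, y}`, `d₁ ≠ 0`,
`d₂ ≠ 0`, and multiplication `x² = a₁(x + (d₂/d₁)y), xy = −d₂(x + (d₂/d₁)y),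
yx = −(a₁d₁/d₂)(x + (d₂/d₁)y), y² = d₁(x + (d₂/d₁)y)` satisfies
`(a·b)·c = 0` for all `a, b, c`; hence with zero comultiplication it is a
self-distributive bialgebra. -/
theorem stmt_14 (k A : Type*) [Field k] (a₁ d₁ d₂ : k) (hd₁ : d₁ ≠ 0) (hd₂ : d₂ ≠ 0)
    [NonUnitalNonAssocRing A] [Module k A]
    [SMulCommClass k A A] [IsScalarTower k A A]
    (B : Module.Basis (Fin 2) k A) (x y : A) (hx : x = B 0) (hy : y = B 1)
    (hxx : x * x = a₁ • (x + (d₂ / d₁) • y))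
    (hxy : x * y = (-d₂) • (x + (d₂ / d₁) • y))
    (hyx : y * x = (-(a₁ * d₁ / d₂)) • (x + (d₂ / d₁) • y))
    (hyy : y * y = d₁ • (x + (d₂ / d₁) • y)) :
    ∀ a b c : A, (a * b) * c = 0 := by
  set w : A := x + (d₂ / d₁) • y with hw
  have hrepr : ∀ c : A, c = B.repr c 0 • x + B.repr c 1 • y := by
    intro c
    conv_lhs => rw [← B.sum_repr c]
    rw [Fin.sum_univ_two, hx, hy]
  have hwx : w * x = 0 := by
    rw [hw, add_mul, smul_mul_assoc, hxx, hyx, smul_smul]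
    rw [← add_smul]
    have : a₁ + d₂ / d₁ * -(a₁ * d₁ / d₂) = 0 := by field_simp; ring
    rw [this, zero_smul]
  have hwy : w * y = 0 := by
    rw [hw, add_mul, smul_mul_assoc, hxy, hyy, smul_smul]
    rw [← add_smul]
    have : -d₂ + d₂ / d₁ * d₁ = 0 := by field_simp; ring
    rw [this, zero_smul]
  have hwc : ∀ c : A, w * c = 0 := by
    intro c
    rw [hrepr c, mul_add, mul_smul_comm, mul_smul_comm, hwx, hwy, smul_zero,
      smul_zero, add_zero]
  have hab : ∀ a b : A, ∃ s : k, a * b = s • w := by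
    intro a b
    refine ⟨B.repr a 0 * B.repr b 0 * a₁ + B.repr a 0 * B.repr b 1 * (-d₂)
      + B.repr a 1 * B.repr b 0 * (-(a₁ * d₁ / d₂)) + B.repr a 1 * B.repr b 1 * d₁, ?_⟩
    conv_lhs => rw [hrepr a, hrepr b]
    simp only [add_mul, mul_add, smul_mul_assoc, mul_smul_comm, hxx, hxy, hyx, hyy]
    simp only [smul_smul, ← add_smul]
    ring_nf
  intro a b c
  obtain ⟨s, hs⟩ := hab a b
  rw [hs, smul_mul_assoc, hwc c, smul_zero]
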